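/- Fix T > 0 and 0 ≤ α₀ < 2. Define g(x) = 1/(x e (1 + ∫₁^{1/x} T/(T + t^{α₀/2}) dt)) for x ∈ (0,1). Then g is integrable on (0,1). -/

import Mathlib

open Real MeasureTheory

theorem stmt_14 (T α₀ : ℝ) (hT : 0 < T) (hα₀ : 0 ≤ α₀) (hα₀2 : α₀ < 2) :
    IntegrableOn
      (fun x : ℝ =>
        1 / (x * Real.exp 1 * (1 + ∫ t in (1:ℝ)..(1 / x), T / (T + t ^ (α₀ / 2)))))
      (Set.Ioo 0 1) volume := by
  set β := α₀ / 2 with hβdef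
  have hβ0 : 0 ≤ β := by positivity
  have hβ1 : β < 1 := by rw [hβdef]; linarith
  set f : ℝ → ℝ := fun t => T / (T + t ^ β) with hf
  -- continuity of f on Ioi 0
  have hfc : ContinuousOn f (Set.Ioi 0) := by
    apply ContinuousOn.div continuousOn_const
    · exact continuousOn_const.add fun t ht =>
        (Real.continuousAt_rpow_const t β (Or.inl (ne_of_gt ht))).continuousWithinAt
    · intro t ht
      have : (0:ℝ) < t ^ β := Real.rpow_pos_of_pos ht β
      positivity
  -- f is nonneg and interval integrable on [1, u] for u ≥ 1
  have hfnonneg : ∀ t : ℝ, 0 < t → 0 ≤ f t := by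
    intro t ht
    have : (0:ℝ) < t ^ β := Real.rpow_pos_of_pos ht β
    positivity
  have hfint : ∀ u : ℝ, 1 ≤ u → IntervalIntegrable f volume 1 u := by
    intro u hu
    apply ContinuousOn.intervalIntegrable
    apply hfc.mono
    rw [Set.uIcc_of_le hu]
    intro t ht
    exact lt_of_lt_of_le one_pos ht.1
  set F : ℝ → ℝ := fun u => ∫ t in (1:ℝ)..u, f t with hF
  -- F nonneg for u ≥ 1
  have hFnonneg : ∀ u : ℝ, 1 ≤ u → 0 ≤ F u := by
    intro u hu
    apply intervalIntegral.integral_nonneg hu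
    intro t ht
    exact hfnonneg t (lt_of_lt_of_le one_pos ht.1)
  -- continuity of F at each u > 1
  have hFcont : ∀ u : ℝ, 1 < u → ContinuousAt F u := by
    intro u hu
    have h1 : ContinuousOn F (Set.uIcc (1:ℝ) (u + 1)) :=
      intervalIntegral.continuousOn_primitive_interval'
        (hfint (u + 1) (by linarith)) Set.left_mem_uIcc
    have h2 : Set.uIcc (1:ℝ) (u+1) ∈ nhds u := by
      rw [Set.uIcc_of_le (by linarith)]
      exact Icc_mem_nhds hu (by linarith)
    exact h1.continuousAt h2
  -- continuity of g on Ioo 0 1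
  have hgc : ContinuousOn
      (fun x : ℝ => 1 / (x * Real.exp 1 * (1 + F (1/x)))) (Set.Ioo 0 1) := by
    apply ContinuousOn.div continuousOn_const
    · apply ContinuousOn.mul (continuousOn_id.mul continuousOn_const)
      apply ContinuousOn.add continuousOn_const
      intro x hx
      have hx1 : 1 < 1 / x := by
        rw [lt_div_iff₀ hx.1]; simpa using hx.2
      apply ContinuousAt.continuousWithinAt
      exact (hFcont (1/x) hx1).comp (continuousAt_const.div continuousAt_id (ne_of_gt hx.1))
    · intro x hx
      have hx1 : 1 ≤ 1 / x := by
        rw [le_div_iff₀ hx.1]; simpa using hx.2.le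
      have h1 : 0 ≤ F (1/x) := hFnonneg _ hx1
      have := Real.exp_pos 1
      have hx0 := hx.1
      positivity
  -- positivity of denominator and key bound
  have key : ∀ x ∈ Set.Ioo (0:ℝ) 1,
      1 / (x * Real.exp 1 * (1 + F (1/x)))
        ≤ 2 / Real.exp 1 + 2 / (Real.exp 1 * T) * x ^ (-β) := by
    intro x hx
    obtain ⟨hx0, hx1⟩ := hx
    have he := Real.exp_pos 1
    have hinv1 : 1 ≤ 1 / x := by rw [le_div_iff₀ hx0]; simpa using hx1.le
    have hFpos : 0 ≤ F (1/x) := hFnonneg _ hinv1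
    have hxβ : (0:ℝ) < x ^ (-β) := Real.rpow_pos_of_pos hx0 _
    rcases le_or_gt (1/2 : ℝ) x with hhalf | hhalf
    · -- x ≥ 1/2: bound by 2/e
      have hD : Real.exp 1 / 2 ≤ x * Real.exp 1 * (1 + F (1/x)) := by
        have h1 : Real.exp 1 / 2 ≤ x * Real.exp 1 := by
          rw [div_le_iff₀ (by norm_num : (0:ℝ) < 2)]
          nlinarith
        calc Real.exp 1 / 2 ≤ x * Real.exp 1 := h1
          _ = x * Real.exp 1 * 1 := by ring
          _ ≤ x * Real.exp 1 * (1 + F (1/x)) := by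
              apply mul_le_mul_of_nonneg_left (by linarith) (by positivity)
      have : 1 / (x * Real.exp 1 * (1 + F (1/x))) ≤ 1 / (Real.exp 1 / 2) :=
        one_div_le_one_div_of_le (by positivity) hD
      calc 1 / (x * Real.exp 1 * (1 + F (1/x))) ≤ 1 / (Real.exp 1 / 2) := this
        _ = 2 / Real.exp 1 := by rw [one_div_div]
        _ ≤ 2 / Real.exp 1 + 2 / (Real.exp 1 * T) * x ^ (-β) := by
            have : 0 ≤ 2 / (Real.exp 1 * T) * x ^ (-β) := by positivity
            linarith
    · -- x < 1/2: use lower bound on F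
      set c : ℝ := T / (T + x ^ (-β)) with hc
      have hc0 : 0 < c := by positivity
      have hlb : (1/x - 1) * c ≤ F (1/x) := by
        have : ∀ t ∈ Set.Icc (1:ℝ) (1/x), c ≤ f t := by
          intro t ht
          have ht0 : (0:ℝ) < t := lt_of_lt_of_le one_pos ht.1
          have htβ : t ^ β ≤ (1/x) ^ β :=
            Real.rpow_le_rpow ht0.le ht.2 hβ0
          have h1x : (1/x) ^ β = x ^ (-β) := by
            rw [one_div, Real.inv_rpow hx0.le, Real.rpow_neg hx0.le]
          rw [h1x] at htβ
          have htpos : (0:ℝ) < t ^ β := Real.rpow_pos_of_pos ht0 β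
          rw [hc, hf]
          apply div_le_div_of_nonneg_left hT.le (by positivity) (by linarith)
        calc (1/x - 1) * c = ∫ _t in (1:ℝ)..(1/x), c := by
              rw [intervalIntegral.integral_const, smul_eq_mul]
          _ ≤ F (1/x) := intervalIntegral.integral_mono_on hinv1
              intervalIntegrable_const (hfint _ hinv1) this
      have hlb2 : (1/(2*x)) * c ≤ F (1/x) := by
        have : (1/(2*x)) * c ≤ (1/x - 1) * c := by
          apply mul_le_mul_of_nonneg_right _ hc0.le
          rw [div_le_iff₀ (by positivity : (0:ℝ) < 2*x)]
          have hq : (1/x - 1) * (2*x) = 2 - 2*x := by field_simp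
          rw [hq]; linarith
        linarith
      have hD : Real.exp 1 / 2 * c ≤ x * Real.exp 1 * (1 + F (1/x)) := by
        have h1 : x * Real.exp 1 * ((1/(2*x)) * c) = Real.exp 1 / 2 * c := by
          field_simp
        calc Real.exp 1 / 2 * c = x * Real.exp 1 * ((1/(2*x)) * c) := h1.symm
          _ ≤ x * Real.exp 1 * (1 + F (1/x)) := by
              apply mul_le_mul_of_nonneg_left _ (by positivity)
              nlinarith
      have hfinal : 1/(Real.exp 1/2 * c)
          = 2/Real.exp 1 + 2/(Real.exp 1 * T) * x ^ (-β) := by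
        rw [hc]
        field_simp
      calc 1 / (x * Real.exp 1 * (1 + F (1/x))) ≤ 1/(Real.exp 1/2 * c) :=
            one_div_le_one_div_of_le (by positivity) hD
        _ = 2/Real.exp 1 + 2/(Real.exp 1 * T) * x ^ (-β) := hfinal
  -- dominating function is integrable
  have hdom : IntegrableOn
      (fun x : ℝ => 2/Real.exp 1 + 2/(Real.exp 1 * T) * x ^ (-β)) (Set.Ioo 0 1) := by
    apply Integrable.add
    · exact (integrableOn_const_iff).mpr (Or.inr measure_Ioo_lt_top)
    · exact ((intervalIntegral.integrableOn_Ioo_rpow_iff one_pos).mpr (by linarith)).const_mul _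
  refine Integrable.mono' hdom (hgc.aestronglyMeasurable measurableSet_Ioo) ?_
  rw [ae_restrict_iff' measurableSet_Ioo]
  refine Filter.Eventually.of_forall fun x hx => ?_
  have hinv1 : 1 ≤ 1 / x := by rw [le_div_iff₀ hx.1]; simpa using hx.2.le
  have hF0 : 0 ≤ F (1/x) := hFnonneg _ hinv1
  have he := Real.exp_pos 1
  have hx0 := hx.1
  have hnn : 0 ≤ 1 / (x * Real.exp 1 * (1 + F (1/x))) := by positivity
  calc ‖1 / (x * Real.exp 1 * (1 + F (1/x)))‖
      = 1 / (x * Real.exp 1 * (1 + F (1/x))) := by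
        rw [Real.norm_eq_abs, abs_of_nonneg hnn]
    _ ≤ 2/Real.exp 1 + 2/(Real.exp 1 * T) * x ^ (-β) := key x hx
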